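/- Let A be a ring and (U,V) a complete hereditary cotorsion pair in Mod-A. For an A-module M and integer n ≥ 0, the following are equivalent: (1) M has a resolution 0 → U_n → ... → U_0 → M → 0 with each U_i in U; (2) for every projective resolution P of M, the n-th cokernel (syzygy) Coker(P_{n+1} → P_n) is in U; (3) Ext_A^{n+1}(M,V) = 0 for every V in V. -/

import Mathlib

universe u

open CategoryTheory Limits

namespace OSG

variable (A : Type u) [Ring A]

/-- `Ext¹_A(M,N) = 0`: every short exact sequence `0 → N → E → M → 0` splits. -/
def Ext1Zero (M N : ModuleCat.{u} A) : Prop :=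
  ∀ (E : ModuleCat.{u} A) (i : N ⟶ E) (p : E ⟶ M),
    Function.Injective i → Function.Surjective p →
      LinearMap.range i.hom = LinearMap.ker p.hom → ∃ r : E ⟶ N, i ≫ r = 𝟙 N

/-- `Ext^{n+1}_A(M,N) = 0`, expressed by dimension shifting along projective resolutions. -/
def ExtZeroSucc (n : ℕ) (M N : ModuleCat.{u} A) : Prop :=
  ∀ P : ProjectiveResolution M, Ext1Zero A (cokernel (P.complex.d (n + 1) n)) N

def IsCotorsionPair (U V : Set (ModuleCat.{u} A)) : Prop :=
  U = {M | ∀ N ∈ V, Ext1Zero A M N} ∧ V = {N | ∀ M ∈ U, Ext1Zero A M N}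

/-- Every module has a special `U`-precover and a special `V`-preenvelope. -/
def IsCompletePair (U V : Set (ModuleCat.{u} A)) : Prop :=
  (∀ M : ModuleCat.{u} A, ∃ (K U₀ : ModuleCat.{u} A) (j : K ⟶ U₀) (p : U₀ ⟶ M),
      U₀ ∈ U ∧ K ∈ V ∧ Function.Injective j ∧ Function.Surjective p ∧
        LinearMap.range j.hom = LinearMap.ker p.hom) ∧
  (∀ M : ModuleCat.{u} A, ∃ (V₀ C : ModuleCat.{u} A) (ι : M ⟶ V₀) (q : V₀ ⟶ C),
      V₀ ∈ V ∧ C ∈ U ∧ Function.Injective ι ∧ Function.Surjective q ∧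
        LinearMap.range ι.hom = LinearMap.ker q.hom)

def IsHereditaryPair (U V : Set (ModuleCat.{u} A)) : Prop :=
  ∀ M ∈ U, ∀ N ∈ V, ∀ n : ℕ, ExtZeroSucc A n M N

def leftPerp (C : Set (ModuleCat.{u} A)) : Set (ModuleCat.{u} A) :=
  {M | ∀ N ∈ C, Ext1Zero A M N}

def rightPerp (C : Set (ModuleCat.{u} A)) : Set (ModuleCat.{u} A) :=
  {N | ∀ M ∈ C, Ext1Zero A M N}

def GeneratedBySet (V : Set (ModuleCat.{u} A)) : Prop :=
  ∃ S : Set (ModuleCat.{u} A), V = rightPerp A S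

/-- `M` has a resolution `0 → U_n → ⋯ → U_0 → M → 0` with all `U_i ∈ U`
(i.e. `U`-projective dimension at most `n`). -/
def ResLE (U : Set (ModuleCat.{u} A)) : ℕ → ModuleCat.{u} A → Prop
  | 0, M => M ∈ U
  | n + 1, M =>
    ResLE U n M ∨
      ∃ (K U₀ : ModuleCat.{u} A) (j : K ⟶ U₀) (p : U₀ ⟶ M),
        U₀ ∈ U ∧ Function.Injective j ∧ Function.Surjective p ∧
          LinearMap.range j.hom = LinearMap.ker p.hom ∧ ResLE U n K

/-- `M` has a coresolution `0 → M → V^0 → ⋯ → V^n → 0` with all `V^i ∈ V`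
(i.e. `V`-injective dimension at most `n`). -/
def CoresLE (V : Set (ModuleCat.{u} A)) : ℕ → ModuleCat.{u} A → Prop
  | 0, M => M ∈ V
  | n + 1, M =>
    CoresLE V n M ∨
      ∃ (V₀ C : ModuleCat.{u} A) (ι : M ⟶ V₀) (q : V₀ ⟶ C),
        V₀ ∈ V ∧ Function.Injective ι ∧ Function.Surjective q ∧
          LinearMap.range ι.hom = LinearMap.ker q.hom ∧ CoresLE V n C

/-- The `U`-projective dimension of `M`, as an extended natural number. -/
noncomputable def resDim (U : Set (ModuleCat.{u} A)) (M : ModuleCat.{u} A) : ℕ∞ :=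
  sInf {c : ℕ∞ | ∃ n : ℕ, c = n ∧ ResLE A U n M}

/-- The `V`-injective dimension of `M`, as an extended natural number. -/
noncomputable def coresDim (V : Set (ModuleCat.{u} A)) (M : ModuleCat.{u} A) : ℕ∞ :=
  sInf {c : ℕ∞ | ∃ n : ℕ, c = n ∧ CoresLE A V n M}

def prjClass : Set (ModuleCat.{u} A) := {M | Projective M}

def injClass : Set (ModuleCat.{u} A) := {M | Injective M}

section Complexes

/-- The complex `T` is acyclic (exact everywhere). -/
def Acyclic (T : ChainComplex (ModuleCat.{u} A) ℤ) : Prop := ∀ n : ℤ, T.ExactAt n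

/-- The complex `Hom_A(E, T)` is acyclic. -/
def HomIntoExact (E : ModuleCat.{u} A) (T : ChainComplex (ModuleCat.{u} A) ℤ) : Prop :=
  ∀ (n : ℤ) (f : E ⟶ T.X n), f ≫ T.d n (n - 1) = 0 →
    ∃ g : E ⟶ T.X (n + 1), g ≫ T.d (n + 1) n = f

/-- The complex `Hom_A(T, W)` is acyclic. -/
def HomFromExact (T : ChainComplex (ModuleCat.{u} A) ℤ) (W : ModuleCat.{u} A) : Prop :=
  ∀ (n : ℤ) (f : T.X n ⟶ W), T.d (n + 1) n ≫ f = 0 →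
    ∃ g : T.X (n - 1) ⟶ W, T.d n (n - 1) ≫ g = f

/-- `M` is a Gorenstein injective `A`-module. -/
def GorensteinInjective (M : ModuleCat.{u} A) : Prop :=
  ∃ T : ChainComplex (ModuleCat.{u} A) ℤ,
    (∀ n, Injective (T.X n)) ∧ Acyclic A T ∧
      (∀ E : ModuleCat.{u} A, Injective E → HomIntoExact A E T) ∧
      ∃ n : ℤ, Nonempty (M ≅ T.cycles n)

/-- `M` is a Gorenstein projective `A`-module. -/
def GorensteinProjective (M : ModuleCat.{u} A) : Prop :=
  ∃ T : ChainComplex (ModuleCat.{u} A) ℤ,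
    (∀ n, Projective (T.X n)) ∧ Acyclic A T ∧
      (∀ Q : ModuleCat.{u} A, Projective Q → HomFromExact A T Q) ∧
      ∃ n : ℤ, Nonempty (M ≅ T.cycles n)

end Complexes
section Tensor

/-- The balancing relations inside `N ⊗_ℤ M` for a right module `N` and a left module `M`. -/
def balRel (N : ModuleCat.{u} Aᵐᵒᵖ) (M : ModuleCat.{u} A) :
    Submodule ℤ (TensorProduct ℤ N M) :=
  Submodule.span ℤ
    {x | ∃ (n : N) (a : A) (m : M),
      x = (MulOpposite.op a • n) ⊗ₜ[ℤ] m - n ⊗ₜ[ℤ] (a • m)}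

/-- The tensor product `N ⊗_A M` of a right `A`-module and a left `A`-module. -/
def balTensor (N : ModuleCat.{u} Aᵐᵒᵖ) (M : ModuleCat.{u} A) : Type u :=
  TensorProduct ℤ N M ⧸ balRel A N M

noncomputable instance (N : ModuleCat.{u} Aᵐᵒᵖ) (M : ModuleCat.{u} A) :
    AddCommGroup (balTensor A N M) :=
  inferInstanceAs (AddCommGroup (TensorProduct ℤ N M ⧸ balRel A N M))

noncomputable instance (N : ModuleCat.{u} Aᵐᵒᵖ) (M : ModuleCat.{u} A) :
    Module ℤ (balTensor A N M) :=
  inferInstanceAs (Module ℤ (TensorProduct ℤ N M ⧸ balRel A N M))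

/-- The map `N ⊗_A M → N ⊗_A M'` induced by `f : M → M'`. -/
noncomputable def balMap (N : ModuleCat.{u} Aᵐᵒᵖ) {M M' : ModuleCat.{u} A} (f : M ⟶ M') :
    balTensor A N M →ₗ[ℤ] balTensor A N M' :=
  Submodule.mapQ (balRel A N M) (balRel A N M')
    (LinearMap.lTensor (R := ℤ) N f.hom.toAddMonoidHom.toIntLinearMap)
    (by
      unfold balRel
      rw [Submodule.span_le]
      rintro x ⟨n, a, m, rfl⟩
      have h : f.hom.toAddMonoidHom.toIntLinearMap (a • m) = a • f.hom.toAddMonoidHom.toIntLinearMap m :=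
        f.hom.map_smul a m
      have key : (LinearMap.lTensor (R := ℤ) N f.hom.toAddMonoidHom.toIntLinearMap)
          ((MulOpposite.op a • n) ⊗ₜ[ℤ] m - n ⊗ₜ[ℤ] (a • m)) ∈ Submodule.span ℤ
            {x : TensorProduct ℤ N M' | ∃ (n : N) (a : A) (m : M'),
              x = (MulOpposite.op a • n) ⊗ₜ[ℤ] m - n ⊗ₜ[ℤ] (a • m)} := by
        rw [map_sub, LinearMap.lTensor_tmul, LinearMap.lTensor_tmul, h]
        exact Submodule.subset_span ⟨n, a, f.hom.toAddMonoidHom.toIntLinearMap m, rfl⟩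
      exact key)

/-- The map `N ⊗_A M → N' ⊗_A M` induced by `g : N → N'`. -/
noncomputable def balMapR {N N' : ModuleCat.{u} Aᵐᵒᵖ} (g : N ⟶ N') (M : ModuleCat.{u} A) :
    balTensor A N M →ₗ[ℤ] balTensor A N' M :=
  Submodule.mapQ (balRel A N M) (balRel A N' M)
    (LinearMap.rTensor (R := ℤ) M g.hom.toAddMonoidHom.toIntLinearMap)
    (by
      unfold balRel
      rw [Submodule.span_le]
      rintro x ⟨n, a, m, rfl⟩
      have h : g.hom.toAddMonoidHom.toIntLinearMap (MulOpposite.op a • n) =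
          MulOpposite.op a • g.hom.toAddMonoidHom.toIntLinearMap n :=
        g.hom.map_smul (MulOpposite.op a) n
      have key : (LinearMap.rTensor (R := ℤ) M g.hom.toAddMonoidHom.toIntLinearMap)
          ((MulOpposite.op a • n) ⊗ₜ[ℤ] m - n ⊗ₜ[ℤ] (a • m)) ∈ Submodule.span ℤ
            {x : TensorProduct ℤ N' M | ∃ (n : N') (a : A) (m : M),
              x = (MulOpposite.op a • n) ⊗ₜ[ℤ] m - n ⊗ₜ[ℤ] (a • m)} := by
        rw [map_sub, LinearMap.rTensor_tmul, LinearMap.rTensor_tmul, h]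
        exact Submodule.subset_span ⟨g.hom.toAddMonoidHom.toIntLinearMap n, a, m, rfl⟩
      exact key)

/-- A left `A`-module `M` is flat if `− ⊗_A M` preserves injections of right `A`-modules. -/
def FlatM (M : ModuleCat.{u} A) : Prop :=
  ∀ (N N' : ModuleCat.{u} Aᵐᵒᵖ) (g : N ⟶ N'), Function.Injective g →
    Function.Injective (balMapR A g M)

def flatClass : Set (ModuleCat.{u} A) := {M | FlatM A M}

/-- `M` is cotorsion if `Ext¹_A(F,M) = 0` for every flat module `F`. -/
def cotClass : Set (ModuleCat.{u} A) := {M | ∀ F ∈ flatClass A, Ext1Zero A F M}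

end Tensor
section Rest

variable (A : Type u) [Ring A]

/-- Exactness of `N ⊗_A T` at spot `n`. -/
def TensorExactAt (N : ModuleCat.{u} Aᵐᵒᵖ) (T : ChainComplex (ModuleCat.{u} A) ℤ)
    (n : ℤ) : Prop :=
  LinearMap.range (balMap A N (T.d (n + 1) n)) = LinearMap.ker (balMap A N (T.d n (n - 1)))

/-- `M` is a Gorenstein flat `A`-module. -/
def GorensteinFlat (M : ModuleCat.{u} A) : Prop :=
  ∃ T : ChainComplex (ModuleCat.{u} A) ℤ,
    (∀ n, T.X n ∈ flatClass A) ∧ Acyclic A T ∧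
      (∀ N : ModuleCat.{u} Aᵐᵒᵖ, Injective N → ∀ n : ℤ, TensorExactAt A N T n) ∧
      ∃ n : ℤ, Nonempty (M ≅ T.cycles n)

def gprjClass : Set (ModuleCat.{u} A) := {M | GorensteinProjective A M}
def ginjClass : Set (ModuleCat.{u} A) := {M | GorensteinInjective A M}
def gflatClass : Set (ModuleCat.{u} A) := {M | GorensteinFlat A M}

/-- projective dimension -/
noncomputable def pdim (M : ModuleCat.{u} A) : ℕ∞ := resDim A (prjClass A) M
/-- injective dimension -/
noncomputable def idim (M : ModuleCat.{u} A) : ℕ∞ := coresDim A (injClass A) M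
/-- flat dimension -/
noncomputable def fdim (M : ModuleCat.{u} A) : ℕ∞ := resDim A (flatClass A) M
/-- Gorenstein projective dimension -/
noncomputable def gpdim (M : ModuleCat.{u} A) : ℕ∞ := resDim A (gprjClass A) M
/-- Gorenstein injective dimension -/
noncomputable def gidim (M : ModuleCat.{u} A) : ℕ∞ := coresDim A (ginjClass A) M
/-- Gorenstein flat dimension -/
noncomputable def gfdim (M : ModuleCat.{u} A) : ℕ∞ := resDim A (gflatClass A) M

noncomputable def spli : ℕ∞ := ⨆ (I : ModuleCat.{u} A) (_ : Injective I), pdim A I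
noncomputable def silp : ℕ∞ := ⨆ (P : ModuleCat.{u} A) (_ : Projective P), idim A P
noncomputable def sfli : ℕ∞ := ⨆ (I : ModuleCat.{u} A) (_ : Injective I), fdim A I
noncomputable def splf : ℕ∞ := ⨆ (F : ModuleCat.{u} A) (_ : F ∈ flatClass A), pdim A F

noncomputable def FPD : ℕ∞ := ⨆ (M : ModuleCat.{u} A) (_ : pdim A M ≠ ⊤), pdim A M
noncomputable def FID : ℕ∞ := ⨆ (M : ModuleCat.{u} A) (_ : idim A M ≠ ⊤), idim A M
noncomputable def FFD : ℕ∞ := ⨆ (M : ModuleCat.{u} A) (_ : fdim A M ≠ ⊤), fdim A M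

/-- Gorenstein global dimension. -/
noncomputable def Ggldim : ℕ∞ := ⨆ (M : ModuleCat.{u} A), gpdim A M
/-- Gorenstein weak global dimension. -/
noncomputable def Gwgldim : ℕ∞ := ⨆ (M : ModuleCat.{u} A), gfdim A M

/-- sup of `U`-projective dimensions of injective modules. -/
noncomputable def relspli (U : Set (ModuleCat.{u} A)) : ℕ∞ :=
  ⨆ (I : ModuleCat.{u} A) (_ : Injective I), resDim A U I
/-- sup of `V`-injective dimensions of projective modules. -/
noncomputable def relsilp (V : Set (ModuleCat.{u} A)) : ℕ∞ :=
  ⨆ (P : ModuleCat.{u} A) (_ : Projective P), coresDim A V P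
/-- finitistic `U`-projective dimension. -/
noncomputable def relFPD (U : Set (ModuleCat.{u} A)) : ℕ∞ :=
  ⨆ (M : ModuleCat.{u} A) (_ : resDim A U M ≠ ⊤), resDim A U M
/-- finitistic `V`-injective dimension. -/
noncomputable def relFID (V : Set (ModuleCat.{u} A)) : ℕ∞ :=
  ⨆ (M : ModuleCat.{u} A) (_ : coresDim A V M ≠ ⊤), coresDim A V M

/-- Every acyclic complex of injectives has cycles in `V`. -/
def WeaklyRightPeriodic (V : Set (ModuleCat.{u} A)) : Prop :=
  ∀ T : ChainComplex (ModuleCat.{u} A) ℤ,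
    (∀ n, Injective (T.X n)) → Acyclic A T → ∀ n : ℤ, T.cycles n ∈ V

/-- Every acyclic complex of projectives has cycles in `U`. -/
def WeaklyLeftPeriodic (U : Set (ModuleCat.{u} A)) : Prop :=
  ∀ T : ChainComplex (ModuleCat.{u} A) ℤ,
    (∀ n, Projective (T.X n)) → Acyclic A T → ∀ n : ℤ, T.cycles n ∈ U

/-- A right `U`-totally acyclic complex witnesses a right `U`-Gorenstein module. -/
def RightGorenstein (U V : Set (ModuleCat.{u} A)) : Set (ModuleCat.{u} A) :=
  {M | ∃ T : ChainComplex (ModuleCat.{u} A) ℤ,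
    (∀ n, T.X n ∈ U) ∧ Acyclic A T ∧ (∀ n : ℤ, T.cycles n ∈ V) ∧
      (∀ W ∈ U ∩ V, HomFromExact A T W) ∧ Nonempty (M ≅ cokernel (T.d 1 0))}

/-- acyclic with all cycles in `V`. -/
def VAcyclicCx (V : Set (ModuleCat.{u} A)) (W : ChainComplex (ModuleCat.{u} A) ℤ) : Prop :=
  Acyclic A W ∧ ∀ n : ℤ, W.cycles n ∈ V

/-- acyclic with all cycles in `U`. -/
def UAcyclicCx (U : Set (ModuleCat.{u} A)) (W : ChainComplex (ModuleCat.{u} A) ℤ) : Prop :=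
  Acyclic A W ∧ ∀ n : ℤ, W.cycles n ∈ U

/-- A complex of modules in `U` is semi-`U` if every chain map to a `V`-acyclic
complex is null-homotopic (equivalently, `Hom(X,W)` is acyclic for `V`-acyclic `W`). -/
def SemiU (U V : Set (ModuleCat.{u} A)) (X : ChainComplex (ModuleCat.{u} A) ℤ) : Prop :=
  (∀ n, X.X n ∈ U) ∧
    ∀ W : ChainComplex (ModuleCat.{u} A) ℤ, VAcyclicCx A V W →
      ∀ f : X ⟶ W, Nonempty (Homotopy f 0)

/-- A complex of modules in `V` is semi-`V` if every chain map from a `U`-acyclic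
complex to it is null-homotopic. -/
def SemiV (U V : Set (ModuleCat.{u} A)) (Y : ChainComplex (ModuleCat.{u} A) ℤ) : Prop :=
  (∀ n, Y.X n ∈ V) ∧
    ∀ T : ChainComplex (ModuleCat.{u} A) ℤ, UAcyclicCx A U T →
      ∀ f : T ⟶ Y, Nonempty (Homotopy f 0)

/-- `W` is isomorphic to the module `M` in the derived category. -/
def IsReplacementOf (W : ChainComplex (ModuleCat.{u} A) ℤ) (M : ModuleCat.{u} A) : Prop :=
  (∀ n : ℤ, n ≠ 0 → W.ExactAt n) ∧ Nonempty (W.homology 0 ≅ M)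

/-- `RGor_U`-projective dimension of `M` is at most `n`: some semi-`U`-`V` replacement `W`
of `M` has `Coker(W_{n+1} → W_n)` right `U`-Gorenstein. -/
def RGorpdLE (U V : Set (ModuleCat.{u} A)) (n : ℕ) (M : ModuleCat.{u} A) : Prop :=
  ∃ W : ChainComplex (ModuleCat.{u} A) ℤ,
    SemiU A U V W ∧ SemiV A U V W ∧ IsReplacementOf A W M ∧
      cokernel (W.d ((n : ℤ) + 1) (n : ℤ)) ∈ RightGorenstein A U V

/-- The `RGor_U`-projective dimension. -/
noncomputable def rgorDim (U V : Set (ModuleCat.{u} A)) (M : ModuleCat.{u} A) : ℕ∞ :=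
  sInf {c : ℕ∞ | ∃ n : ℕ, c = n ∧ RGorpdLE A U V n M}

/-- The `RGor_U` relative Gorenstein global dimension. -/
noncomputable def rgorGldim (U V : Set (ModuleCat.{u} A)) : ℕ∞ :=
  ⨆ (M : ModuleCat.{u} A), rgorDim A U V M

/-- The Gorenstein flat-cotorsion dimension. -/
noncomputable def gfcDim (M : ModuleCat.{u} A) : ℕ∞ :=
  rgorDim A (flatClass A) (cotClass A) M

/-- The Gorenstein flat-cotorsion global dimension. -/
noncomputable def Gfcgldim : ℕ∞ := rgorGldim A (flatClass A) (cotClass A)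

/-- `A` is right weak coherent: products of flat left `A`-modules have finite
flat dimension. -/
def RightWeakCoherent : Prop :=
  ∀ (ι : Type u) (F : ι → ModuleCat.{u} A), (∀ i, F i ∈ flatClass A) →
    fdim A (ModuleCat.of A ((i : ι) → F i)) ≠ ⊤

/-- `A` is left `ℵ₀`-noetherian: every left ideal is countably generated. -/
def Aleph0Noetherian : Prop :=
  ∀ I : Ideal A, ∃ s : Set A, s.Countable ∧ Ideal.span s = I

end Rest


section Aux

variable {A : Type u} [Ring A]

section Helpers

lemma comp_app {M N K : ModuleCat.{u} A} (f : M ⟶ N) (g : N ⟶ K) (x : M) :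
    (f ≫ g) x = g (f x) := rfl

/-- From a section of `p` get a retraction of `i` in a short exact sequence. -/
lemma retraction_of_section {N E M : ModuleCat.{u} A} (i : N ⟶ E) (p : E ⟶ M)
    (hi : Function.Injective i) (hr : LinearMap.range i.hom = LinearMap.ker p.hom)
    (s : M ⟶ E) (hs : s ≫ p = 𝟙 M) : ∃ r : E ⟶ N, i ≫ r = 𝟙 N := by
  have hmem : ∀ e : E, e - s (p e) ∈ LinearMap.range i.hom := by
    intro e
    rw [hr, LinearMap.mem_ker, map_sub]
    have : p (s (p e)) = p e := congrArg (fun f : M ⟶ M => f (p e)) hs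
    rw [this, sub_self]
  let eq := LinearEquiv.ofInjective i.hom hi
  refine ⟨ModuleCat.ofHom <| eq.symm.toLinearMap.comp ((LinearMap.id (R := A) (M := E) -
      s.hom.comp p.hom).codRestrict (LinearMap.range i.hom) hmem), ?_⟩
  ext n
  have h0 : p (i n) = 0 := by
    have : i n ∈ LinearMap.ker p.hom := hr ▸ LinearMap.mem_range_self _ n
    exact this
  show eq.symm (LinearMap.codRestrict (LinearMap.range i.hom)
      (LinearMap.id - s.hom.comp p.hom) hmem (i n)) = n
  rw [LinearEquiv.symm_apply_eq]
  apply Subtype.ext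
  show i n - s (p (i n)) = (eq n : E)
  rw [h0, map_zero, sub_zero]
  rfl

/-- From a retraction of `i` get a section of `q` in a short exact sequence. -/
lemma section_of_retraction {N G X : ModuleCat.{u} A} (a : N ⟶ G) (q : G ⟶ X)
    (hq : Function.Surjective q) (hr : LinearMap.range a.hom = LinearMap.ker q.hom)
    (ρ : G ⟶ N) (hρ : a ≫ ρ = 𝟙 N) : ∃ s : X ⟶ G, s ≫ q = 𝟙 X := by
  have hρa : ∀ n : N, ρ (a n) = n := fun n => congrArg (fun f : N ⟶ N => f n) hρ
  let θ : G →ₗ[A] (N × X) := LinearMap.prod ρ.hom q.hom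
  have hinj : Function.Injective θ := by
    intro g g' h
    have h1 : ρ g = ρ g' := congrArg Prod.fst h
    have h2 : q g = q g' := congrArg Prod.snd h
    have hker : g - g' ∈ LinearMap.ker q.hom := by rw [LinearMap.mem_ker, map_sub, h2, sub_self]
    rw [← hr] at hker
    obtain ⟨n, hn⟩ := hker
    have hn0 : n = 0 := by
      have : ρ (g - g') = 0 := by rw [map_sub, h1, sub_self]
      rw [← hn, hρa] at this
      exact this
    rw [hn0, map_zero] at hn
    have := hn.symm
    rw [sub_eq_zero] at this
    exact this
  have hsurj : Function.Surjective θ := by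
    rintro ⟨n, x⟩
    obtain ⟨g₀, hg₀⟩ := hq x
    refine ⟨g₀ - a (ρ g₀) + a n, ?_⟩
    have hqa : ∀ m : N, q (a m) = 0 := by
      intro m
      have : a m ∈ LinearMap.ker q.hom := hr ▸ LinearMap.mem_range_self _ m
      exact this
    apply Prod.ext
    · show ρ _ = n
      simp only [map_add, map_sub, hρa]
      abel
    · show q _ = x
      simp only [map_add, map_sub, hqa, hg₀]
      abel
  let Θ := LinearEquiv.ofBijective θ ⟨hinj, hsurj⟩
  refine ⟨ModuleCat.ofHom (Θ.symm.toLinearMap.comp (LinearMap.inr A N X)), ?_⟩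
  ext x
  show q (Θ.symm (0, x)) = x
  have := Θ.apply_symm_apply (0, x)
  exact congrArg Prod.snd this

/-- Projectivity: lift a map through a map with larger range. -/
lemma lift_through {P B C : ModuleCat.{u} A} (hP : Projective P) (α : P ⟶ B) (β : C ⟶ B)
    (h : LinearMap.range α.hom ≤ LinearMap.range β.hom) :
    ∃ γ : P ⟶ C, γ ≫ β = α := by
  haveI := hP
  let B' := ModuleCat.of A (↥(LinearMap.range β.hom))
  let β' : C ⟶ B' := ModuleCat.ofHom <| β.hom.rangeRestrict
  let α' : P ⟶ B' := ModuleCat.ofHom <| α.hom.codRestrict _ (fun x => h ⟨x, rfl⟩)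
  haveI : Epi β' := (ModuleCat.epi_iff_surjective _).mpr
    (LinearMap.surjective_rangeRestrict _)
  refine ⟨Projective.factorThru α' β', ?_⟩
  ext x
  exact congrArg Subtype.val
    (congrArg (fun f : P ⟶ B' => f x) (Projective.factorThru_comp α' β'))

end Helpers

section Ext1Lemmas

lemma ext1_of_projective {Q N : ModuleCat.{u} A} (hQ : Projective Q) : Ext1Zero A Q N := by
  intro E i p hi hp hr
  haveI := hQ
  haveI : Epi p := (ModuleCat.epi_iff_surjective p).mpr hp
  exact retraction_of_section i p hi hr (Projective.factorThru (𝟙 Q) p)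
    (Projective.factorThru_comp _ _)

/-- A retract of a module with vanishing `Ext¹` has vanishing `Ext¹`. -/
lemma ext1_retract {M' E N : ModuleCat.{u} A} (ι : M' ⟶ E) (r : E ⟶ M')
    (hιr : ι ≫ r = 𝟙 M') (h : Ext1Zero A E N) : Ext1Zero A M' N := by
  intro G a b ha hb hrange
  have hrι : ∀ x : M', r (ι x) = x := fun x => congrArg (fun f : M' ⟶ M' => f x) hιr
  set φ : (↥G × ↥E) →ₗ[A] M' :=
    b.hom.comp (LinearMap.fst A ↥G ↥E) -
    r.hom.comp (LinearMap.snd A ↥G ↥E) with hφ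
  set Gm := ModuleCat.of A ↥(LinearMap.ker φ) with hGm
  have hmem : ∀ n : N, ((a n : G), (0 : E)) ∈ LinearMap.ker φ := by
    intro n
    have : b (a n) = 0 := by
      have : a n ∈ LinearMap.ker b.hom := hrange ▸ LinearMap.mem_range_self _ n
      exact this
    simp [hφ, LinearMap.mem_ker, this]
  let a' : N ⟶ Gm := ModuleCat.ofHom <| LinearMap.codRestrict _ (LinearMap.prod a.hom 0) hmem
  let p' : Gm ⟶ E := ModuleCat.ofHom <| (LinearMap.snd A ↥G ↥E).comp (LinearMap.ker φ).subtype
  have ha' : Function.Injective a' := by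
    intro n n' h
    apply ha
    exact congrArg (fun z : ↥(LinearMap.ker φ) => (z : ↥G × ↥E).1) h
  have hp' : Function.Surjective p' := by
    intro e
    obtain ⟨g, hg⟩ := hb (r e)
    exact ⟨⟨(g, e), by simp [hφ, LinearMap.mem_ker, hg]⟩, rfl⟩
  have hr' : LinearMap.range a'.hom = LinearMap.ker p'.hom := by
    ext z
    constructor
    · rintro ⟨n, rfl⟩
      show p' (a' n) = 0
      rfl
    · intro hz
      have h2 : z.val.2 = 0 := hz
      have h1 : b z.val.1 = 0 := by
        have hzz := z.2
        rw [LinearMap.mem_ker] at hzz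
        have hzz' : b z.val.1 - r z.val.2 = 0 := hzz
        rw [h2, map_zero, sub_zero] at hzz'
        exact hzz'
      have : z.val.1 ∈ LinearMap.range a.hom := by rw [hrange]; exact h1
      obtain ⟨n, hn⟩ := this
      refine ⟨n, ?_⟩
      apply Subtype.ext
      apply Prod.ext
      · exact hn
      · exact h2.symm
  obtain ⟨ρ, hρ⟩ := h Gm a' p' ha' hp' hr'
  have hmem2 : ∀ g : G, ((g : G), ι (b g)) ∈ LinearMap.ker φ := by
    intro g
    simp [hφ, LinearMap.mem_ker, hrι]
  refine ⟨ModuleCat.ofHom <| ρ.hom.comp (LinearMap.codRestrict _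
    (LinearMap.prod LinearMap.id (ι.hom.comp b.hom)) hmem2), ?_⟩
  ext n
  show ρ ⟨(a n, ι (b (a n))), _⟩ = n
  have hb0 : b (a n) = 0 := by
    have : a n ∈ LinearMap.ker b.hom := hrange ▸ LinearMap.mem_range_self _ n
    exact this
  have : (⟨(a n, ι (b (a n))), hmem2 (a n)⟩ : ↥(LinearMap.ker φ)) = a' n := by
    apply Subtype.ext
    apply Prod.ext
    · rfl
    · show ι (b (a n)) = 0
      rw [hb0, map_zero]
  rw [this]
  exact congrArg (fun f : N ⟶ N => f n) hρ

lemma ext1_congr {M M' N : ModuleCat.{u} A} (e : ↥M ≃ₗ[A] ↥M') :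
    Ext1Zero A M N ↔ Ext1Zero A M' N := by
  constructor
  · intro h
    refine ext1_retract (ModuleCat.ofHom e.symm.toLinearMap : M' ⟶ M) (ModuleCat.ofHom e.toLinearMap : M ⟶ M') ?_ h
    ext x; exact e.apply_symm_apply x
  · intro h
    refine ext1_retract (ModuleCat.ofHom e.toLinearMap : M ⟶ M') (ModuleCat.ofHom e.symm.toLinearMap : M' ⟶ M) ?_ h
    ext x; exact e.symm_apply_apply x

/-- Extension closure for vanishing of `Ext¹`. -/
lemma ext1_extension {X E Y N : ModuleCat.{u} A} (i : X ⟶ E) (p : E ⟶ Y)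
    (hi : Function.Injective i) (hp : Function.Surjective p)
    (hr : LinearMap.range i.hom = LinearMap.ker p.hom)
    (hX : Ext1Zero A X N) (hY : Ext1Zero A Y N) : Ext1Zero A E N := by
  intro G a b ha hb hrange
  have hpi : ∀ x : X, p (i x) = 0 := by
    intro x
    have : i x ∈ LinearMap.ker p.hom := hr ▸ LinearMap.mem_range_self _ x
    exact this
  set bp : G ⟶ Y := b ≫ p with hbp
  set GXm := ModuleCat.of A ↥(LinearMap.ker bp.hom) with hGXm
  have hmemA : ∀ n : N, a n ∈ LinearMap.ker bp.hom := by
    intro n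
    have hb0 : b (a n) = 0 := by
      have : a n ∈ LinearMap.ker b.hom := hrange ▸ LinearMap.mem_range_self _ n
      exact this
    show p (b (a n)) = 0
    rw [hb0, map_zero]
  let aX : N ⟶ GXm := ModuleCat.ofHom <| LinearMap.codRestrict _ a.hom hmemA
  have hmemB : ∀ z : ↥(LinearMap.ker bp.hom), b (z : G) ∈ LinearMap.range i.hom := by
    intro z
    rw [hr]
    exact z.2
  let ieq := LinearEquiv.ofInjective i.hom hi
  let q : GXm ⟶ X := ModuleCat.ofHom <| ieq.symm.toLinearMap.comp (LinearMap.codRestrict _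
    (b.hom.comp (LinearMap.ker bp.hom).subtype) hmemB)
  have hq_eq : ∀ z : GXm, i (q z) = b z.val := by
    intro z
    show i.hom (ieq.symm ⟨b z.val, hmemB z⟩) = b z.val
    have := ieq.apply_symm_apply ⟨b z.val, hmemB z⟩
    exact congrArg Subtype.val this
  have haX : Function.Injective aX := fun n n' h => ha (congrArg Subtype.val h)
  have hqsurj : Function.Surjective q := by
    intro x
    obtain ⟨g, hg⟩ := hb (i x)
    have hgmem : g ∈ LinearMap.ker bp.hom := by
      show p (b g) = 0
      rw [hg]; exact hpi x
    refine ⟨⟨g, hgmem⟩, hi ?_⟩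
    rw [hq_eq ⟨g, hgmem⟩]
    exact hg
  have hrq : LinearMap.range aX.hom = LinearMap.ker q.hom := by
    ext z
    constructor
    · rintro ⟨n, rfl⟩
      show q _ = 0
      apply hi
      rw [hq_eq]
      show b (a n) = i 0
      rw [map_zero]
      have : a n ∈ LinearMap.ker b.hom := hrange ▸ LinearMap.mem_range_self _ n
      exact this
    · intro hz
      have hbz : b z.val = 0 := by
        rw [← hq_eq z, (hz : q z = 0), map_zero]
      have : z.val ∈ LinearMap.range a.hom := by rw [hrange]; exact hbz
      obtain ⟨n, hn⟩ := this
      exact ⟨n, Subtype.ext hn⟩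
  obtain ⟨ρ, hρ⟩ := hX GXm aX q haX hqsurj hrq
  obtain ⟨s₁', hs₁'⟩ := section_of_retraction aX q hqsurj hrq ρ hρ
  set s₁ : X ⟶ G := s₁' ≫ (ModuleCat.ofHom ((LinearMap.ker bp.hom).subtype : ↥GXm →ₗ[A] ↥G) : GXm ⟶ G) with hs₁def
  have hbs₁ : ∀ x : X, b (s₁ x) = i x := by
    intro x
    have h1 : q (s₁' x) = x := congrArg (fun f : X ⟶ X => f x) hs₁'
    have h2 : i (q (s₁' x)) = b (s₁' x).val := hq_eq _
    show b (s₁' x).val = i x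
    rw [← h2, h1]
  have hps₁ : ∀ x : X, bp (s₁ x) = 0 := by
    intro x
    show p (b (s₁ x)) = 0
    rw [hbs₁ x]; exact hpi x
  set Gbar := ModuleCat.of A (↥G ⧸ LinearMap.range s₁.hom) with hGbar
  let π : G ⟶ Gbar := ModuleCat.ofHom <| (LinearMap.range s₁.hom).mkQ
  let abar : N ⟶ Gbar := a ≫ π
  have hle : LinearMap.range s₁.hom ≤ LinearMap.ker bp.hom := by
    rintro _ ⟨x, rfl⟩
    exact hps₁ x
  let bbar : Gbar ⟶ Y := ModuleCat.ofHom <| (LinearMap.range s₁.hom).liftQ bp.hom hle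
  have habar : Function.Injective abar := by
    intro n n' h
    have : a n - a n' ∈ LinearMap.range s₁.hom := by
      rw [← Submodule.Quotient.eq]
      exact h
    obtain ⟨x, hx⟩ := this
    have hbx : b (s₁ x) = 0 := by
      rw [hx, map_sub]
      have h1 : b (a n) = 0 := by
        have : a n ∈ LinearMap.ker b.hom := hrange ▸ LinearMap.mem_range_self _ n
        exact this
      have h2 : b (a n') = 0 := by
        have : a n' ∈ LinearMap.ker b.hom := hrange ▸ LinearMap.mem_range_self _ n'
        exact this
      rw [h1, h2, sub_self]
    rw [hbs₁ x] at hbx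
    have hx0 : x = 0 := hi (by rw [hbx, map_zero])
    rw [hx0, map_zero] at hx
    have := hx.symm
    rw [sub_eq_zero] at this
    exact ha this
  have hbbar : Function.Surjective bbar := by
    intro y
    obtain ⟨e, he⟩ := hp y
    obtain ⟨g, hg⟩ := hb e
    exact ⟨π g, by show p (b g) = y; rw [hg, he]⟩
  have hrbar : LinearMap.range abar.hom = LinearMap.ker bbar.hom := by
    ext z
    constructor
    · rintro ⟨n, rfl⟩
      show bbar (π (a n)) = 0
      show p (b (a n)) = 0
      have : a n ∈ LinearMap.ker b.hom := hrange ▸ LinearMap.mem_range_self _ n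
      rw [(this : b (a n) = 0), map_zero]
    · intro hz
      obtain ⟨g, rfl⟩ := Submodule.mkQ_surjective _ z
      have hg : p (b g) = 0 := hz
      have : b g ∈ LinearMap.range i.hom := by rw [hr]; exact hg
      obtain ⟨x, hx⟩ := this
      have : g - s₁ x ∈ LinearMap.ker b.hom := by
        rw [LinearMap.mem_ker, map_sub, hbs₁ x, hx, sub_self]
      rw [← hrange] at this
      obtain ⟨n, hn⟩ := this
      refine ⟨n, ?_⟩
      show Submodule.Quotient.mk (a n) = Submodule.Quotient.mk g
      rw [Submodule.Quotient.eq]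
      exact ⟨-x, by rw [map_neg, hn]; abel⟩
  obtain ⟨ρ₂, hρ₂⟩ := hY Gbar abar bbar habar hbbar hrbar
  exact ⟨π ≫ ρ₂, hρ₂⟩

end Ext1Lemmas

section ResoSection

variable (A)

/-- A hand-rolled augmented projective resolution. -/
structure Reso (M : ModuleCat.{u} A) : Type (u+1) where
  C : ℕ → ModuleCat.{u} A
  d : ∀ k, C (k+1) ⟶ C k
  aug : C 0 ⟶ M
  proj : ∀ k, Projective (C k)
  aug_surj : Function.Surjective aug
  ex0 : LinearMap.range (d 0).hom = LinearMap.ker aug.hom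
  ex : ∀ k, LinearMap.range (d (k+1)).hom = LinearMap.ker (d k).hom

variable {A}

namespace Reso

variable {M : ModuleCat.{u} A} (R S : Reso A M)

lemma d_d (k : ℕ) : R.d (k+1) ≫ R.d k = 0 := by
  ext x
  have : R.d (k+1) x ∈ LinearMap.ker (R.d k).hom := (R.ex k) ▸ LinearMap.mem_range_self _ x
  exact this

lemma d_aug : R.d 0 ≫ R.aug = 0 := by
  ext x
  have : R.d 0 x ∈ LinearMap.ker R.aug.hom := R.ex0 ▸ LinearMap.mem_range_self _ x
  exact this

lemma range_le_of_comp_zero {P : ModuleCat.{u} A} (k : ℕ) (φ : P ⟶ S.C (k+1))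
    (h : φ ≫ S.d k = 0) :
    LinearMap.range φ.hom ≤ LinearMap.range (S.d (k+1)).hom := by
  rw [S.ex k]
  rintro _ ⟨x, rfl⟩
  exact congrArg (fun F : P ⟶ S.C k => F x) h

lemma range_le_of_comp_aug_zero {P : ModuleCat.{u} A} (φ : P ⟶ S.C 0)
    (h : φ ≫ S.aug = 0) :
    LinearMap.range φ.hom ≤ LinearMap.range (S.d 0).hom := by
  rw [S.ex0]
  rintro _ ⟨x, rfl⟩
  exact congrArg (fun F : P ⟶ M => F x) h

/-- One step of lifting along resolutions. -/
noncomputable def liftStep (k : ℕ) (f : R.C k ⟶ S.C k)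
    (h : LinearMap.range (R.d k ≫ f).hom ≤ LinearMap.range (S.d k).hom) :
    {g : R.C (k+1) ⟶ S.C (k+1) // g ≫ S.d k = R.d k ≫ f} :=
  ⟨(lift_through (R.proj (k+1)) (R.d k ≫ f) (S.d k) h).choose,
   (lift_through (R.proj (k+1)) (R.d k ≫ f) (S.d k) h).choose_spec⟩

lemma step_inv (k : ℕ) (f : R.C k ⟶ S.C k) (g : R.C (k+1) ⟶ S.C (k+1))
    (hcomm : g ≫ S.d k = R.d k ≫ f) :
    LinearMap.range (R.d (k+1) ≫ g).hom ≤
      LinearMap.range (S.d (k+1)).hom := by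
  apply range_le_of_comp_zero
  rw [Category.assoc, hcomm, ← Category.assoc, R.d_d, zero_comp]

lemma base_inv (f0 : R.C 0 ⟶ S.C 0) (h : f0 ≫ S.aug = R.aug) :
    LinearMap.range (R.d 0 ≫ f0).hom ≤ LinearMap.range (S.d 0).hom := by
  apply range_le_of_comp_aug_zero
  rw [Category.assoc, h, R.d_aug]

/-- The chain of lifts. -/
noncomputable def liftPair (f0 : R.C 0 ⟶ S.C 0) (h0 : f0 ≫ S.aug = R.aug) :
    ∀ k : ℕ, Σ' (f : R.C k ⟶ S.C k) (g : R.C (k+1) ⟶ S.C (k+1)), g ≫ S.d k = R.d k ≫ f :=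
  fun k => Nat.rec
    (let p := liftStep R S 0 f0 (base_inv R S f0 h0); ⟨f0, p.1, p.2⟩)
    (fun k ih =>
      let p := liftStep R S (k+1) ih.2.1 (step_inv R S k ih.1 ih.2.1 ih.2.2)
      ⟨ih.2.1, p.1, p.2⟩) k

lemma lift_exists : ∃ f : ∀ k, R.C k ⟶ S.C k,
    (f 0 ≫ S.aug = R.aug) ∧ ∀ k, f (k+1) ≫ S.d k = R.d k ≫ f k := by
  have hrange : LinearMap.range R.aug.hom ≤
      LinearMap.range S.aug.hom := by
    rw [LinearMap.range_eq_top.mpr S.aug_surj]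
    exact le_top
  obtain ⟨f0, h0⟩ := lift_through (R.proj 0) R.aug S.aug hrange
  refine ⟨fun k => (liftPair R S f0 h0 k).1, h0, fun k => ?_⟩
  show (liftPair R S f0 h0 k).2.1 ≫ S.d k = R.d k ≫ (liftPair R S f0 h0 k).1
  exact (liftPair R S f0 h0 k).2.2

/-- choice form of lifting. -/
noncomputable def liftChoice {P B C : ModuleCat.{u} A} (hP : Projective P) (α : P ⟶ B)
    (β : C ⟶ B)
    (h : LinearMap.range α.hom ≤ LinearMap.range β.hom) :
    {γ : P ⟶ C // γ ≫ β = α} :=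
  ⟨(lift_through hP α β h).choose, (lift_through hP α β h).choose_spec⟩

section Homotopy

variable (u v : ∀ k, R.C k ⟶ S.C k)

lemma hinvBase (hu : ∀ k, u (k+1) ≫ S.d k = R.d k ≫ u k)
    (hv : ∀ k, v (k+1) ≫ S.d k = R.d k ≫ v k) (H0 : R.C 0 ⟶ S.C 1) (hH0 : H0 ≫ S.d 0 = u 0 - v 0) :
    LinearMap.range (u 1 - v 1 - R.d 0 ≫ H0).hom ≤
      LinearMap.range (S.d 1).hom := by
  apply range_le_of_comp_zero
  rw [Preadditive.sub_comp, Preadditive.sub_comp, Category.assoc, hH0, hu, hv,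
    Preadditive.comp_sub]
  abel

lemma hinvStep (hu : ∀ k, u (k+1) ≫ S.d k = R.d k ≫ u k)
    (hv : ∀ k, v (k+1) ≫ S.d k = R.d k ≫ v k) (k : ℕ) (Hk : R.C k ⟶ S.C (k+1)) (Hk1 : R.C (k+1) ⟶ S.C (k+2))
    (hrel : Hk1 ≫ S.d (k+1) = u (k+1) - v (k+1) - R.d k ≫ Hk) :
    LinearMap.range (u (k+2) - v (k+2) - R.d (k+1) ≫ Hk1).hom ≤
      LinearMap.range (S.d (k+2)).hom := by
  apply range_le_of_comp_zero
  rw [Preadditive.sub_comp, Preadditive.sub_comp, Category.assoc, hrel, hu, hv,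
    Preadditive.comp_sub, Preadditive.comp_sub, ← Category.assoc, R.d_d, zero_comp]
  abel

/-- The chain of homotopies. -/
noncomputable def homotopyPair (hu : ∀ k, u (k+1) ≫ S.d k = R.d k ≫ u k)
    (hv : ∀ k, v (k+1) ≫ S.d k = R.d k ≫ v k)
    (H0 : R.C 0 ⟶ S.C 1) (hH0 : H0 ≫ S.d 0 = u 0 - v 0) :
    ∀ k : ℕ, Σ' (Hk : R.C k ⟶ S.C (k+1)) (Hk1 : R.C (k+1) ⟶ S.C (k+2)),
      Hk1 ≫ S.d (k+1) = u (k+1) - v (k+1) - R.d k ≫ Hk :=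
  fun k => Nat.rec
    (let p := liftChoice (R.proj 1) (u 1 - v 1 - R.d 0 ≫ H0) (S.d 1)
      (hinvBase R S u v hu hv H0 hH0)
     ⟨H0, p.1, p.2⟩)
    (fun k ih =>
      let p := liftChoice (R.proj (k+2)) (u (k+2) - v (k+2) - R.d (k+1) ≫ ih.2.1)
        (S.d (k+2)) (hinvStep R S u v hu hv k ih.1 ih.2.1 ih.2.2)
      ⟨ih.2.1, p.1, p.2⟩) k

lemma homotopy_exists (hu : ∀ k, u (k+1) ≫ S.d k = R.d k ≫ u k)
    (hv : ∀ k, v (k+1) ≫ S.d k = R.d k ≫ v k) (haug : u 0 ≫ S.aug = v 0 ≫ S.aug) :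
    ∃ H : ∀ k, R.C k ⟶ S.C (k+1),
      (H 0 ≫ S.d 0 = u 0 - v 0) ∧
      ∀ k, H (k+1) ≫ S.d (k+1) = u (k+1) - v (k+1) - R.d k ≫ H k := by
  have hinv0 : LinearMap.range (u 0 - v 0).hom ≤
      LinearMap.range (S.d 0).hom := by
    apply range_le_of_comp_aug_zero
    rw [Preadditive.sub_comp, haug, sub_self]
  obtain ⟨H0, hH0⟩ := lift_through (R.proj 0) (u 0 - v 0) (S.d 0) hinv0
  refine ⟨fun k => (homotopyPair R S u v hu hv H0 hH0 k).1, hH0, fun k => ?_⟩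
  show (homotopyPair R S u v hu hv H0 hH0 k).2.1 ≫ S.d (k+1) =
    u (k+1) - v (k+1) - R.d k ≫ (homotopyPair R S u v hu hv H0 hH0 k).1
  exact (homotopyPair R S u v hu hv H0 hH0 k).2.2

end Homotopy

/-- Cocycles at spot `n+1` are coboundaries (i.e. `Ext^{n+1}(M,N) = 0` computed via `R`). -/
def CB (R : Reso A M) (n : ℕ) (N : ModuleCat.{u} A) : Prop :=
  ∀ f : R.C (n+1) ⟶ N, R.d (n+1) ≫ f = 0 → ∃ g : R.C n ⟶ N, R.d n ≫ g = f

lemma CB_transfer (R R' : Reso A M) (n : ℕ) (N : ModuleCat.{u} A) (h : CB R' n N) :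
    CB R n N := by
  obtain ⟨φ, hφaug, hφ⟩ := Reso.lift_exists R R'
  obtain ⟨ψ, hψaug, hψ⟩ := Reso.lift_exists R' R
  obtain ⟨H, hH0, hH⟩ := Reso.homotopy_exists R R (fun k => φ k ≫ ψ k) (fun k => 𝟙 _)
    (fun k => by
      show (φ (k+1) ≫ ψ (k+1)) ≫ R.d k = R.d k ≫ (φ k ≫ ψ k)
      rw [Category.assoc, hψ k, ← Category.assoc, hφ k, Category.assoc])
    (fun k => by simp)
    (by
      show (φ 0 ≫ ψ 0) ≫ R.aug = 𝟙 _ ≫ R.aug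
      rw [Category.assoc, hψaug, hφaug, Category.id_comp])
  intro f hf
  have hf' : R'.d (n+1) ≫ (ψ (n+1) ≫ f) = 0 := by
    rw [← Category.assoc, ← hψ (n+1), Category.assoc, hf, comp_zero]
  obtain ⟨g', hg'⟩ := h (ψ (n+1) ≫ f) hf'
  refine ⟨φ n ≫ g' - H n ≫ f, ?_⟩
  have h1 : R.d n ≫ φ n ≫ g' = φ (n+1) ≫ ψ (n+1) ≫ f := by
    rw [← Category.assoc, ← hφ n, Category.assoc, hg']
  have h4 : (0 : R.C (n+1) ⟶ N) = φ (n+1) ≫ ψ (n+1) ≫ f - f - R.d n ≫ H n ≫ f := by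
    have h5 := congrArg (fun w : R.C (n+1) ⟶ R.C (n+1) => w ≫ f) (hH n)
    have h6 : (H (n+1) ≫ R.d (n+1)) ≫ f = 0 := by
      rw [Category.assoc, hf, comp_zero]
    have h7 : ((φ (n+1) ≫ ψ (n+1)) - 𝟙 _ - R.d n ≫ H n) ≫ f =
        φ (n+1) ≫ ψ (n+1) ≫ f - f - R.d n ≫ H n ≫ f := by
      rw [Preadditive.sub_comp, Preadditive.sub_comp, Category.id_comp,
        Category.assoc, Category.assoc]
    have h5' : (H (n+1) ≫ R.d (n+1)) ≫ f =
        ((φ (n+1) ≫ ψ (n+1)) - 𝟙 _ - R.d n ≫ H n) ≫ f := h5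
    rw [← h7, ← h5', h6]
  rw [Preadditive.comp_sub, h1]
  calc φ (n+1) ≫ ψ (n+1) ≫ f - R.d n ≫ H n ≫ f
      = (φ (n+1) ≫ ψ (n+1) ≫ f - f - R.d n ≫ H n ≫ f) + f := by abel
    _ = f := by rw [← h4, zero_add]

end Reso

section LemmaC

/-- `Ext¹(coker D, N) = 0` iff cocycles are coboundaries. -/
lemma ext1_coker_iff {X2 X1 X0 N : ModuleCat.{u} A} (e : X2 ⟶ X1) (D : X1 ⟶ X0)
    (hex : LinearMap.range e.hom = LinearMap.ker D.hom)
    (h0 : Projective X0) :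
    Ext1Zero A (ModuleCat.of A (↥X0 ⧸ LinearMap.range D.hom)) N ↔
      ∀ f : X1 ⟶ N, e ≫ f = 0 → ∃ g : X0 ⟶ N, D ≫ g = f := by
  set Q := ModuleCat.of A (↥X0 ⧸ LinearMap.range D.hom) with hQ
  let π : X0 ⟶ Q := ModuleCat.ofHom <| (LinearMap.range D.hom).mkQ
  have hπD : ∀ x : X1, π (D x) = 0 := by
    intro x
    exact (Submodule.Quotient.mk_eq_zero _).mpr (LinearMap.mem_range_self _ x)
  constructor
  · intro h f hf
    set S := LinearMap.range (LinearMap.prod f.hom (-D.hom)) with hS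
    set Y := ModuleCat.of A ((↥N × ↥X0) ⧸ S) with hY
    let mk : (↥N × ↥X0) →ₗ[A] Y := S.mkQ
    let iY : N ⟶ Y := ModuleCat.ofHom <| mk.comp (LinearMap.inl A ↥N ↥X0)
    have hle : S ≤ LinearMap.ker (π.hom.comp (LinearMap.snd A ↥N ↥X0)) := by
      rintro _ ⟨x, rfl⟩
      show π (-(D x)) = 0
      rw [map_neg, hπD, neg_zero]
    let pY : Y ⟶ Q := ModuleCat.ofHom <| S.liftQ (π.hom.comp (LinearMap.snd A ↥N ↥X0)) hle
    have hiY : Function.Injective iY := by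
      intro n n' hnn
      have hmem : ((n, (0:↥X0)) - (n', 0)) ∈ S := (Submodule.Quotient.eq S).mp hnn
      obtain ⟨x, hx⟩ := hmem
      have hDx : D x = 0 := by
        have h' := congrArg Prod.snd hx
        have h'' : -(D x) = 0 - 0 := h'
        rw [sub_zero, neg_eq_zero] at h''
        exact h''
      have hxker : x ∈ LinearMap.ker D.hom := hDx
      rw [← hex] at hxker
      obtain ⟨y, hy⟩ := hxker
      have hfx : f x = n - n' := by
        have := congrArg Prod.fst hx
        simpa using this
      have : f x = 0 := by
        rw [← hy]
        exact congrArg (fun F : X2 ⟶ N => F y) hf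
      rw [this] at hfx
      have := hfx.symm
      rw [sub_eq_zero] at this
      exact this
    have hpY : Function.Surjective pY := by
      intro q
      obtain ⟨x0, rfl⟩ := Submodule.mkQ_surjective _ q
      exact ⟨mk (0, x0), rfl⟩
    have hrY : LinearMap.range iY.hom = LinearMap.ker pY.hom := by
      ext z
      constructor
      · rintro ⟨n, rfl⟩
        show pY (mk (n, 0)) = 0
        show π (0 : X0) = 0
        rw [map_zero]
      · intro hz
        obtain ⟨⟨n, x0⟩, rfl⟩ := Submodule.mkQ_surjective _ z
        have hx0 := (Submodule.Quotient.mk_eq_zero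
          (LinearMap.range D.hom)).mp hz
        obtain ⟨x, hx⟩ := hx0
        refine ⟨n + f x, ?_⟩
        show mk (n + f x, 0) = mk (n, x0)
        refine (Submodule.Quotient.eq S).mpr ⟨x, ?_⟩
        have hDx : D x = x0 := hx
        apply Prod.ext
        · show f x = (n + f x) - n
          simp
        · show -(D x) = 0 - x0
          rw [hDx, zero_sub]
    obtain ⟨r, hrret⟩ := h Y iY pY hiY hpY hrY
    refine ⟨ModuleCat.ofHom (r.hom.comp (mk.comp (LinearMap.inr A ↥N ↥X0))), ?_⟩
    ext x
    show r (mk (0, D x)) = f x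
    have hmk : mk (0, D x) = mk (f x, 0) := by
      refine (Submodule.Quotient.eq S).mpr ⟨-x, ?_⟩
      apply Prod.ext
      · show f (-x) = 0 - f x
        rw [map_neg, zero_sub]
      · show -(D (-x)) = D x - 0
        rw [map_neg, neg_neg, sub_zero]
    rw [hmk]
    exact congrArg (fun F : N ⟶ N => F (f x)) hrret
  · intro hcb E i p hi hp hr
    have hπsurj : Function.Surjective π := Submodule.mkQ_surjective _
    obtain ⟨lam, hlam⟩ := lift_through h0 π p
      (by rw [LinearMap.range_eq_top.mpr hp]; exact le_top)
    have hmem : ∀ x : X1, lam (D x) ∈ LinearMap.range i.hom := by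
      intro x
      rw [hr, LinearMap.mem_ker]
      have : p (lam (D x)) = π (D x) := congrArg (fun F : X0 ⟶ Q => F (D x)) hlam
      rw [this, hπD]
    let ieq := LinearEquiv.ofInjective i.hom hi
    let f'' : X1 ⟶ N := ModuleCat.ofHom <| ieq.symm.toLinearMap.comp
      (LinearMap.codRestrict _ (lam.hom.comp D.hom) hmem)
    have hif'' : ∀ x : X1, i (f'' x) = lam (D x) := by
      intro x
      show i.hom (ieq.symm ⟨lam (D x), hmem x⟩) = lam (D x)
      exact congrArg Subtype.val (ieq.apply_symm_apply ⟨lam (D x), hmem x⟩)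
    have hcoc : e ≫ f'' = 0 := by
      ext y
      apply hi
      show i (f'' (e y)) = i 0
      rw [map_zero, hif'']
      have : D (e y) = 0 := by
        have : e y ∈ LinearMap.ker D.hom := hex ▸ LinearMap.mem_range_self _ y
        exact this
      rw [this, map_zero]
    obtain ⟨g, hg⟩ := hcb f'' hcoc
    have hgD : ∀ x : X1, g (D x) = f'' x := fun x => congrArg (fun F : X1 ⟶ N => F x) hg
    let sbar : X0 ⟶ E := lam - g ≫ i
    have hsker : LinearMap.range D.hom ≤ LinearMap.ker sbar.hom := by
      rintro _ ⟨x, rfl⟩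
      show lam (D x) - i (g (D x)) = 0
      rw [hgD, hif'', sub_self]
    let sQ : Q ⟶ E := ModuleCat.ofHom <| (LinearMap.range D.hom).liftQ sbar.hom hsker
    have hpi0 : ∀ n : N, p (i n) = 0 := by
      intro n
      have : i n ∈ LinearMap.ker p.hom := hr ▸ LinearMap.mem_range_self _ n
      exact this
    have hsp : sQ ≫ p = 𝟙 Q := by
      apply ModuleCat.hom_ext
      apply Submodule.linearMap_qext
      ext x
      show p (lam x - i (g x)) = π x
      rw [map_sub, hpi0, sub_zero]
      exact congrArg (fun F : X0 ⟶ Q => F x) hlam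
    exact retraction_of_section i p hi hr sQ hsp

end LemmaC

section Bridge

variable {M N : ModuleCat.{u} A}

/-- Convert a Mathlib projective resolution to a `Reso`. -/
noncomputable def toReso (P : ProjectiveResolution M) : Reso A M where
  C k := P.complex.X k
  d k := P.complex.d (k+1) k
  aug := P.π.f 0
  proj k := P.projective k
  aug_surj := by
    have hepi : Epi (P.π.f 0) := inferInstance
    exact (ModuleCat.epi_iff_surjective (P.π.f 0)).mp hepi
  ex0 := by
    have h := P.exact₀
    rw [ShortComplex.moduleCat_exact_iff_range_eq_ker] at h
    exact h
  ex k := by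
    have h := P.exact_succ k
    rw [ShortComplex.moduleCat_exact_iff_range_eq_ker] at h
    exact h

lemma extZeroSucc_iff_CB (R : Reso A M) (n : ℕ) :
    ExtZeroSucc A n M N ↔ Reso.CB R n N := by
  have key : ∀ P : ProjectiveResolution M,
      Ext1Zero A (cokernel (P.complex.d (n + 1) n)) N ↔ Reso.CB (toReso P) n N := by
    intro P
    have h1 : Ext1Zero A (cokernel (P.complex.d (n + 1) n)) N ↔
        Ext1Zero A (ModuleCat.of A (↥(P.complex.X n) ⧸
          LinearMap.range (P.complex.d (n+1) n).hom)) N :=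
      ext1_congr (ModuleCat.cokernelIsoRangeQuotient (P.complex.d (n + 1) n)).toLinearEquiv
    rw [h1]
    exact ext1_coker_iff (P.complex.d (n+2) (n+1)) (P.complex.d (n+1) n)
      ((toReso P).ex n) (P.projective n)
  constructor
  · intro h
    obtain ⟨P⟩ := (HasProjectiveResolution.out (Z := M))
    exact Reso.CB_transfer R (toReso P) n N ((key P).mp (h P))
  · intro h P
    exact (key P).mpr (Reso.CB_transfer (toReso P) R n N h)

/-- A chosen resolution of each module. -/
noncomputable def resoOf (M : ModuleCat.{u} A) : Reso A M :=
  toReso (HasProjectiveResolution.out (Z := M)).some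

/-- The chosen first syzygy. -/
noncomputable abbrev Syz (M : ModuleCat.{u} A) : ModuleCat.{u} A :=
  ModuleCat.of A ↥(LinearMap.ker (resoOf M).aug.hom)

/-- Shift of a resolution: a resolution of the syzygy. -/
noncomputable def shiftReso (R : Reso A M) :
    Reso A (ModuleCat.of A ↥(LinearMap.ker R.aug.hom)) where
  C k := R.C (k+1)
  d k := R.d (k+1)
  aug := ModuleCat.ofHom <| LinearMap.codRestrict _ (R.d 0).hom
    (fun x => R.ex0 ▸ LinearMap.mem_range_self _ x)
  proj k := R.proj (k+1)
  aug_surj := by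
    rintro ⟨y, hy⟩
    rw [← R.ex0] at hy
    obtain ⟨x, hx⟩ := hy
    exact ⟨x, Subtype.ext hx⟩
  ex0 := by
    rw [ModuleCat.hom_ofHom, LinearMap.ker_codRestrict]
    exact R.ex 0
  ex k := R.ex (k+1)

lemma extZeroSucc_succ_iff (R : Reso A M) (n : ℕ) (N : ModuleCat.{u} A) :
    ExtZeroSucc A (n+1) M N ↔
      ExtZeroSucc A n (ModuleCat.of A ↥(LinearMap.ker R.aug.hom)) N := by
  rw [extZeroSucc_iff_CB R (n+1), extZeroSucc_iff_CB (shiftReso R) n]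
  exact Iff.rfl

lemma extZeroSucc_succ_syz (M : ModuleCat.{u} A) (n : ℕ) (N : ModuleCat.{u} A) :
    ExtZeroSucc A (n+1) M N ↔ ExtZeroSucc A n (Syz M) N :=
  extZeroSucc_succ_iff (resoOf M) n N

lemma extZeroSucc_zero_iff (M N : ModuleCat.{u} A) :
    ExtZeroSucc A 0 M N ↔ Ext1Zero A M N := by
  rw [extZeroSucc_iff_CB (resoOf M) 0]
  have h := ext1_coker_iff (N := N) ((resoOf M).d 1) ((resoOf M).d 0)
    ((resoOf M).ex 0) ((resoOf M).proj 0)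
  have e : (↥((resoOf M).C 0) ⧸ LinearMap.range ((resoOf M).d 0).hom) ≃ₗ[A] ↥M :=
    (Submodule.quotEquivOfEq _ _ (resoOf M).ex0).trans
      (LinearMap.quotKerEquivOfSurjective _ (resoOf M).aug_surj)
  constructor
  · intro hcb
    exact (ext1_congr e).mp (h.mpr hcb)
  · intro h1
    exact h.mp ((ext1_congr e).mpr h1)

end Bridge

end ResoSection

section Cotorsion

variable {U V : Set (ModuleCat.{u} A)}

lemma memU_iff (hU : U = {M | ∀ N ∈ V, Ext1Zero A M N}) (X : ModuleCat.{u} A) :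
    X ∈ U ↔ ∀ N ∈ V, Ext1Zero A X N := by rw [hU]; exact Iff.rfl

lemma proj_memU (hU : U = {M | ∀ N ∈ V, Ext1Zero A M N}) (X : ModuleCat.{u} A)
    (hX : Projective X) : X ∈ U :=
  (memU_iff hU X).mpr (fun _ _ => ext1_of_projective hX)

lemma syz_memU (hU : U = {M | ∀ N ∈ V, Ext1Zero A M N}) (hhered : IsHereditaryPair A U V)
    {X : ModuleCat.{u} A} (hX : X ∈ U) : Syz X ∈ U := by
  rw [memU_iff hU]
  intro N hN
  have h1 : ExtZeroSucc A (0+1) X N := hhered X hX N hN 1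
  have h2 := (extZeroSucc_succ_syz X 0 N).mp h1
  exact (extZeroSucc_zero_iff (Syz X) N).mp h2

/-- `T 0`: `Ext¹` agreement across a short exact sequence with cokernel in `U`. -/
lemma T_zero (hU : U = {M | ∀ N ∈ V, Ext1Zero A M N}) (hhered : IsHereditaryPair A U V)
    (X Z Y : ModuleCat.{u} A) (s : X ⟶ Z) (t : Z ⟶ Y) (hY : Y ∈ U)
    (hs : Function.Injective s) (ht : Function.Surjective t)
    (hrk : LinearMap.range s.hom = LinearMap.ker t.hom) {N : ModuleCat.{u} A} (hN : N ∈ V) :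
    Ext1Zero A Z N ↔ Ext1Zero A X N := by
  have hYN : Ext1Zero A Y N := (memU_iff hU Y).mp hY N hN
  have hΩN : Ext1Zero A (Syz Y) N := (memU_iff hU _).mp (syz_memU hU hhered hY) N hN
  constructor
  · intro hZ
    set RY := resoOf Y with hRY
    obtain ⟨uu, huu⟩ := lift_through (RY.proj 0) RY.aug t
      (by rw [LinearMap.range_eq_top.mpr ht]; exact le_top)
    have huuap : ∀ r : RY.C 0, t (uu r) = RY.aug r :=
      fun r => congrArg (fun F : RY.C 0 ⟶ Y => F r) huu
    set P := ModuleCat.of A (↥X × ↥(RY.C 0)) with hP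
    let q : P ⟶ Z := ModuleCat.ofHom <| s.hom.comp (LinearMap.fst A ↥X ↥(RY.C 0)) +
      uu.hom.comp (LinearMap.snd A ↥X ↥(RY.C 0))
    have hmemv : ∀ ω : ↥(LinearMap.ker RY.aug.hom),
        uu ω.val ∈ LinearMap.range s.hom := by
      intro ω
      rw [hrk, LinearMap.mem_ker, huuap]
      exact ω.2
    let seq := LinearEquiv.ofInjective s.hom hs
    let v : ↥(LinearMap.ker RY.aug.hom) →ₗ[A] ↥X :=
      seq.symm.toLinearMap.comp (LinearMap.codRestrict _
        (uu.hom.comp (LinearMap.ker RY.aug.hom).subtype) hmemv)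
    have hsv : ∀ ω, s (v ω) = uu ω.val := by
      intro ω
      show s.hom (seq.symm ⟨uu ω.val, hmemv ω⟩) = uu ω.val
      exact congrArg Subtype.val (seq.apply_symm_apply ⟨uu ω.val, hmemv ω⟩)
    let w : Syz Y ⟶ P := ModuleCat.ofHom <| LinearMap.prod (-v) (LinearMap.ker RY.aug.hom).subtype
    have hwinj : Function.Injective w := by
      intro ω ω' h
      exact Subtype.ext (congrArg Prod.snd h)
    have hqsurj : Function.Surjective q := by
      intro z
      obtain ⟨r, hr⟩ := RY.aug_surj (t z)
      have : z - uu r ∈ LinearMap.ker t.hom := by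
        rw [LinearMap.mem_ker, map_sub, huuap, hr, sub_self]
      rw [← hrk] at this
      obtain ⟨x, hx⟩ := this
      refine ⟨(x, r), ?_⟩
      show s x + uu r = z
      rw [hx]
      abel
    have hwq : LinearMap.range w.hom = LinearMap.ker q.hom := by
      ext z
      constructor
      · rintro ⟨ω, rfl⟩
        show s (-v ω) + uu ω.val = 0
        rw [map_neg, hsv]
        abel
      · intro hz
        have hz' : s z.1 + uu z.2 = 0 := hz
        have htz : RY.aug z.2 = 0 := by
          have h1 : t (s z.1 + uu z.2) = 0 := by rw [hz', map_zero]
          have h2 : t (s z.1) = 0 := by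
            have : s z.1 ∈ LinearMap.ker t.hom := hrk ▸ LinearMap.mem_range_self _ z.1
            exact this
          rw [map_add, h2, zero_add, huuap] at h1
          exact h1
        refine ⟨⟨z.2, htz⟩, ?_⟩
        have hsx : s (v ⟨z.2, htz⟩) = uu z.2 := hsv _
        have : s (-(v ⟨z.2, htz⟩)) = s z.1 := by
          rw [map_neg, hsx, ← neg_eq_of_add_eq_zero_left hz']
        apply Prod.ext
        · exact hs this
        · rfl
    have hPN : Ext1Zero A P N := ext1_extension w q hwinj hqsurj hwq hΩN hZ
    refine ext1_retract (ModuleCat.ofHom (LinearMap.inl A ↥X ↥(RY.C 0)) : X ⟶ P)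
      (ModuleCat.ofHom (LinearMap.fst A ↥X ↥(RY.C 0)) : P ⟶ X) ?_ hPN
    ext x
    rfl
  · intro hX
    exact ext1_extension s t hs ht hrk hX hYN

/-- The `T` statement at level `k`. -/
def Tstat (U V : Set (ModuleCat.{u} A)) (k : ℕ) : Prop :=
  ∀ (X Z Y : ModuleCat.{u} A) (s : X ⟶ Z) (t : Z ⟶ Y), Y ∈ U →
    Function.Injective s → Function.Surjective t →
    LinearMap.range s.hom = LinearMap.ker t.hom → ∀ N ∈ V,
      (ExtZeroSucc A k Z N ↔ ExtZeroSucc A k X N)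

/-- The `J` statement at level `k`. -/
def Jstat (U V : Set (ModuleCat.{u} A)) (k : ℕ) : Prop :=
  ∀ (B E C : ModuleCat.{u} A) (a : B ⟶ E) (b : E ⟶ C), E ∈ U →
    Function.Injective a → Function.Surjective b →
    LinearMap.range a.hom = LinearMap.ker b.hom → ∀ N ∈ V,
      (ExtZeroSucc A k B N ↔ ExtZeroSucc A (k+1) C N)

lemma J_step (hU : U = {M | ∀ N ∈ V, Ext1Zero A M N}) (k : ℕ)
    (hT : Tstat U V k) : Jstat U V k := by
  intro B E C a b hE ha hb hrk N hN
  set R := resoOf C with hR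
  let φW : (↥(R.C 0) × ↥E) →ₗ[A] C :=
    R.aug.hom.comp (LinearMap.fst A ↥(R.C 0) ↥E) -
    b.hom.comp (LinearMap.snd A ↥(R.C 0) ↥E)
  set Wm := ModuleCat.of A ↥(LinearMap.ker φW) with hWm
  have hba : ∀ x : B, b (a x) = 0 := by
    intro x
    have : a x ∈ LinearMap.ker b.hom := hrk ▸ LinearMap.mem_range_self _ x
    exact this
  -- first SES : 0 → Syz C → Wm → E → 0
  let w2 : Syz C ⟶ Wm := ModuleCat.ofHom <| LinearMap.codRestrict _
    (LinearMap.prod (LinearMap.ker R.aug.hom).subtype 0)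
    (fun ω => by
      show R.aug ω.val - b 0 = 0
      rw [map_zero, sub_zero]
      exact ω.2)
  let pr2 : Wm ⟶ E := ModuleCat.ofHom <| (LinearMap.snd A ↥(R.C 0) ↥E).comp (LinearMap.ker φW).subtype
  have hw2inj : Function.Injective w2 := by
    intro ω ω' h
    exact Subtype.ext (congrArg (fun z : ↥(LinearMap.ker φW) => z.val.1) h)
  have hpr2surj : Function.Surjective pr2 := by
    intro e
    obtain ⟨p, hp⟩ := R.aug_surj (b e)
    exact ⟨⟨(p, e), by show R.aug p - b e = 0; rw [hp, sub_self]⟩, rfl⟩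
  have hw2pr2 : LinearMap.range w2.hom = LinearMap.ker pr2.hom := by
    ext z
    constructor
    · rintro ⟨ω, rfl⟩
      show ((ω.val, (0:↥E)) : ↥(R.C 0) × ↥E).2 = 0
      rfl
    · intro hz
      have h2 : z.val.2 = 0 := hz
      have h1 : R.aug z.val.1 = 0 := by
        have := z.2
        have h3 : R.aug z.val.1 - b z.val.2 = 0 := this
        rw [h2, map_zero, sub_zero] at h3
        exact h3
      exact ⟨⟨z.val.1, h1⟩, Subtype.ext (Prod.ext rfl h2.symm)⟩
  -- second SES : 0 → B → Wm → R.C 0 → 0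
  let w1 : B ⟶ Wm := ModuleCat.ofHom <| LinearMap.codRestrict _ (LinearMap.prod 0 a.hom)
    (fun x => by
      show R.aug 0 - b (a x) = 0
      rw [map_zero, hba, sub_zero])
  let pr1 : Wm ⟶ R.C 0 := ModuleCat.ofHom <| (LinearMap.fst A ↥(R.C 0) ↥E).comp (LinearMap.ker φW).subtype
  have hw1inj : Function.Injective w1 := by
    intro x x' h
    exact ha (congrArg (fun z : ↥(LinearMap.ker φW) => z.val.2) h)
  have hpr1surj : Function.Surjective pr1 := by
    intro p
    obtain ⟨e, he⟩ := hb (R.aug p)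
    exact ⟨⟨(p, e), by show R.aug p - b e = 0; rw [he, sub_self]⟩, rfl⟩
  have hw1pr1 : LinearMap.range w1.hom = LinearMap.ker pr1.hom := by
    ext z
    constructor
    · rintro ⟨x, rfl⟩
      show (((0:↥(R.C 0)), a x) : ↥(R.C 0) × ↥E).1 = 0
      rfl
    · intro hz
      have h1 : z.val.1 = 0 := hz
      have h2 : b z.val.2 = 0 := by
        have h3 : R.aug z.val.1 - b z.val.2 = 0 := z.2
        rw [h1, map_zero, zero_sub, neg_eq_zero] at h3
        exact h3
      have : z.val.2 ∈ LinearMap.range a.hom := by rw [hrk]; exact h2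
      obtain ⟨x, hx⟩ := this
      exact ⟨x, Subtype.ext (Prod.ext h1.symm hx)⟩
  have iff1 := hT (Syz C) Wm E w2 pr2 hE hw2inj hpr2surj hw2pr2 N hN
  have iff2 := hT B Wm (R.C 0) w1 pr1 (proj_memU hU _ (R.proj 0)) hw1inj hpr1surj hw1pr1 N hN
  have iff3 := extZeroSucc_succ_syz C k N
  exact (iff2.symm.trans iff1).trans iff3.symm

lemma T_succ (hU : U = {M | ∀ N ∈ V, Ext1Zero A M N}) (hhered : IsHereditaryPair A U V)
    (k : ℕ) (hJ : Jstat U V k) : Tstat U V (k+1) := by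
  intro X Z Y s t hY hs ht hrk N hN
  set RZ := resoOf Z with hRZ
  let bp : RZ.C 0 ⟶ Y := RZ.aug ≫ t
  have hbpsurj : Function.Surjective bp := fun y => by
    obtain ⟨z, hz⟩ := ht y
    obtain ⟨p, hp⟩ := RZ.aug_surj z
    exact ⟨p, by show t (RZ.aug p) = y; rw [hp, hz]⟩
  set Em := ModuleCat.of A ↥(LinearMap.ker bp.hom) with hEm
  -- Em ∈ U via Schanuel with the chosen resolution of Y
  have hEmU : Em ∈ U := by
    set RY := resoOf Y with hRY
    let ψ : (↥(RZ.C 0) × ↥(RY.C 0)) →ₗ[A] Y :=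
      bp.hom.comp (LinearMap.fst A ↥(RZ.C 0) ↥(RY.C 0)) -
      RY.aug.hom.comp (LinearMap.snd A ↥(RZ.C 0) ↥(RY.C 0))
    set Wt := ModuleCat.of A ↥(LinearMap.ker ψ) with hWt
    let wA : Syz Y ⟶ Wt := ModuleCat.ofHom <| LinearMap.codRestrict _
      (LinearMap.prod 0 (LinearMap.ker RY.aug.hom).subtype)
      (fun ω => by
        show bp 0 - RY.aug ω.val = 0
        rw [map_zero, (ω.2 : RY.aug ω.val = 0), sub_zero])
    let prA : Wt ⟶ RZ.C 0 := ModuleCat.ofHom <| (LinearMap.fst A ↥(RZ.C 0) ↥(RY.C 0)).comp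
      (LinearMap.ker ψ).subtype
    have hwAinj : Function.Injective wA := by
      intro ω ω' h
      exact Subtype.ext (congrArg (fun z : ↥(LinearMap.ker ψ) => z.val.2) h)
    have hprAsurj : Function.Surjective prA := by
      intro p
      obtain ⟨q, hq⟩ := RY.aug_surj (bp p)
      exact ⟨⟨(p, q), by show bp p - RY.aug q = 0; rw [hq, sub_self]⟩, rfl⟩
    have hwApr : LinearMap.range wA.hom = LinearMap.ker prA.hom := by
      ext z
      constructor
      · rintro ⟨ω, rfl⟩
        show (((0:↥(RZ.C 0)), ω.val) : ↥(RZ.C 0) × ↥(RY.C 0)).1 = 0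
        rfl
      · intro hz
        have h1 : z.val.1 = 0 := hz
        have h2 : RY.aug z.val.2 = 0 := by
          have h3 : bp z.val.1 - RY.aug z.val.2 = 0 := z.2
          rw [h1, map_zero, zero_sub, neg_eq_zero] at h3
          exact h3
        exact ⟨⟨z.val.2, h2⟩, Subtype.ext (Prod.ext h1.symm rfl)⟩
    -- second: 0 → Em → Wt → RY.C 0 → 0, split
    let wB : Em ⟶ Wt := ModuleCat.ofHom <| LinearMap.codRestrict _
      (LinearMap.prod (LinearMap.ker bp.hom).subtype 0)
      (fun e => by
        show bp e.val - RY.aug 0 = 0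
        rw [map_zero, (e.2 : bp e.val = 0), sub_zero])
    let prB : Wt ⟶ RY.C 0 := ModuleCat.ofHom <| (LinearMap.snd A ↥(RZ.C 0) ↥(RY.C 0)).comp
      (LinearMap.ker ψ).subtype
    have hwBinj : Function.Injective wB := by
      intro e e' h
      exact Subtype.ext (congrArg (fun z : ↥(LinearMap.ker ψ) => z.val.1) h)
    have hprBsurj : Function.Surjective prB := by
      intro q
      obtain ⟨p, hp⟩ := hbpsurj (RY.aug q)
      exact ⟨⟨(p, q), by show bp p - RY.aug q = 0; rw [hp, sub_self]⟩, rfl⟩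
    have hwBpr : LinearMap.range wB.hom = LinearMap.ker prB.hom := by
      ext z
      constructor
      · rintro ⟨e, rfl⟩
        show ((e.val, (0:↥(RY.C 0))) : ↥(RZ.C 0) × ↥(RY.C 0)).2 = 0
        rfl
      · intro hz
        have h2 : z.val.2 = 0 := hz
        have h1 : bp z.val.1 = 0 := by
          have h3 : bp z.val.1 - RY.aug z.val.2 = 0 := z.2
          rw [h2, map_zero, sub_zero] at h3
          exact h3
        exact ⟨⟨z.val.1, h1⟩, Subtype.ext (Prod.ext rfl h2.symm)⟩
    haveI : Epi prB := (ModuleCat.epi_iff_surjective prB).mpr hprBsurj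
    haveI := RY.proj 0
    obtain ⟨ρ, hρ⟩ := retraction_of_section wB prB hwBinj hwBpr
      (Projective.factorThru (𝟙 (RY.C 0)) prB) (Projective.factorThru_comp _ _)
    rw [memU_iff hU]
    intro N' hN'
    have hΩY : Ext1Zero A (Syz Y) N' := (memU_iff hU _).mp (syz_memU hU hhered hY) N' hN'
    have hPZ0 : Ext1Zero A (RZ.C 0) N' := ext1_of_projective (RZ.proj 0)
    have hWtN : Ext1Zero A Wt N' := ext1_extension wA prA hwAinj hprAsurj hwApr hΩY hPZ0
    exact ext1_retract wB ρ hρ hWtN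
  -- the SES 0 → Syz Z → Em → X → 0
  let aΩ : Syz Z ⟶ Em := ModuleCat.ofHom <| LinearMap.codRestrict _
    ((LinearMap.ker RZ.aug.hom).subtype)
    (fun ω => by
      show t (RZ.aug ω.val) = 0
      rw [(ω.2 : RZ.aug ω.val = 0), map_zero])
  have hmemX : ∀ e : ↥(LinearMap.ker bp.hom),
      RZ.aug e.val ∈ LinearMap.range s.hom := by
    intro e
    rw [hrk, LinearMap.mem_ker]
    exact e.2
  let seq := LinearEquiv.ofInjective s.hom hs
  let φX : Em ⟶ X := ModuleCat.ofHom <| seq.symm.toLinearMap.comp (LinearMap.codRestrict _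
    (RZ.aug.hom.comp (LinearMap.ker bp.hom).subtype) hmemX)
  have hsφX : ∀ e, s (φX e) = RZ.aug e.val := by
    intro e
    show s.hom (seq.symm ⟨RZ.aug e.val, hmemX e⟩) = RZ.aug e.val
    exact congrArg Subtype.val (seq.apply_symm_apply ⟨RZ.aug e.val, hmemX e⟩)
  have haΩinj : Function.Injective aΩ := by
    intro ω ω' h
    exact Subtype.ext (congrArg (fun z : ↥(LinearMap.ker bp.hom) => z.val) h)
  have hφXsurj : Function.Surjective φX := by
    intro x
    obtain ⟨p, hp⟩ := RZ.aug_surj (s x)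
    have hpker : p ∈ LinearMap.ker bp.hom := by
      show t (RZ.aug p) = 0
      rw [hp]
      have : s x ∈ LinearMap.ker t.hom := hrk ▸ LinearMap.mem_range_self _ x
      exact this
    refine ⟨⟨p, hpker⟩, hs ?_⟩
    rw [hsφX]
    exact hp
  have haφ : LinearMap.range aΩ.hom = LinearMap.ker φX.hom := by
    ext e
    constructor
    · rintro ⟨ω, rfl⟩
      show φX _ = 0
      apply hs
      rw [hsφX, map_zero]
      exact (ω.2 : RZ.aug ω.val = 0)
    · intro he
      have : RZ.aug e.val = 0 := by
        rw [← hsφX e, (he : φX e = 0), map_zero]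
      exact ⟨⟨e.val, this⟩, Subtype.ext rfl⟩
  have iff1 := hJ (Syz Z) Em X aΩ φX hEmU haΩinj hφXsurj haφ N hN
  have iff2 := extZeroSucc_succ_syz Z k N
  exact iff2.trans iff1

lemma TJ (hU : U = {M | ∀ N ∈ V, Ext1Zero A M N}) (hhered : IsHereditaryPair A U V) :
    ∀ k : ℕ, Tstat U V k ∧ Jstat U V k := by
  intro k
  induction k with
  | zero =>
    have hT : Tstat U V 0 := by
      intro X Z Y s t hY hs ht hrk N hN
      rw [extZeroSucc_zero_iff Z N, extZeroSucc_zero_iff X N]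
      exact T_zero hU hhered X Z Y s t hY hs ht hrk hN
    exact ⟨hT, J_step hU 0 hT⟩
  | succ k ih =>
    have hT : Tstat U V (k+1) := T_succ hU hhered k ih.2
    exact ⟨hT, J_step hU (k+1) hT⟩

lemma main_forward (hU : U = {M | ∀ N ∈ V, Ext1Zero A M N})
    (hhered : IsHereditaryPair A U V) :
    ∀ (n : ℕ) (M : ModuleCat.{u} A), ResLE A U n M →
      ∀ N ∈ V, ∀ m, n ≤ m → ExtZeroSucc A m M N := by
  intro n
  induction n with
  | zero =>
    intro M h N hN m _
    exact hhered M h N hN m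
  | succ n ih =>
    intro M h N hN m hm
    have h' : ResLE A U n M ∨
        ∃ (K U₀ : ModuleCat.{u} A) (j : K ⟶ U₀) (p : U₀ ⟶ M),
          U₀ ∈ U ∧ Function.Injective j ∧ Function.Surjective p ∧
            LinearMap.range j.hom = LinearMap.ker p.hom ∧ ResLE A U n K := h
    rcases h' with h1 | ⟨K, U₀, j, p, hU₀, hj, hp, hr, hK⟩
    · exact ih M h1 N hN m (le_trans (Nat.le_succ n) hm)
    · obtain ⟨m', rfl⟩ : ∃ m', m = m' + 1 := ⟨m - 1, by omega⟩
      have hm' : n ≤ m' := by omega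
      exact ((TJ hU hhered m').2 K U₀ M j p hU₀ hj hp hr N hN).mp (ih K hK N hN m' hm')

lemma main_backward (hU : U = {M | ∀ N ∈ V, Ext1Zero A M N}) :
    ∀ (n : ℕ) (M : ModuleCat.{u} A), (∀ N ∈ V, ExtZeroSucc A n M N) → ResLE A U n M := by
  intro n
  induction n with
  | zero =>
    intro M h
    show M ∈ U
    rw [memU_iff hU]
    intro N hN
    exact (extZeroSucc_zero_iff M N).mp (h N hN)
  | succ n ih =>
    intro M h
    have hsyz : ∀ N ∈ V, ExtZeroSucc A n (Syz M) N :=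
      fun N hN => (extZeroSucc_succ_syz M n N).mp (h N hN)
    have hres := ih (Syz M) hsyz
    show ResLE A U n M ∨
        ∃ (K U₀ : ModuleCat.{u} A) (j : K ⟶ U₀) (p : U₀ ⟶ M),
          U₀ ∈ U ∧ Function.Injective j ∧ Function.Surjective p ∧
            LinearMap.range j.hom = LinearMap.ker p.hom ∧ ResLE A U n K
    refine Or.inr ⟨Syz M, (resoOf M).C 0,
      (ModuleCat.ofHom ((LinearMap.ker ((resoOf M).aug.hom)).subtype : _ →ₗ[A] _) :
        Syz M ⟶ (resoOf M).C 0),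
      (resoOf M).aug, proj_memU hU _ ((resoOf M).proj 0),
      Submodule.injective_subtype (LinearMap.ker (resoOf M).aug.hom), (resoOf M).aug_surj, ?_, hres⟩
    exact Submodule.range_subtype _

end Cotorsion

end Aux

/-- Prp 1.? : characterizations of `U`-projective dimension at most `n`. -/
theorem stmt_0 (A : Type u) [Ring A] (U V : Set (ModuleCat.{u} A))
    (hpair : IsCotorsionPair A U V) (hcomplete : IsCompletePair A U V)
    (hhered : IsHereditaryPair A U V) (M : ModuleCat.{u} A) (n : ℕ) :
    (ResLE A U n M ↔ ∀ N ∈ V, ExtZeroSucc A n M N) ∧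
    ((∀ P : ProjectiveResolution M, cokernel (P.complex.d (n + 1) n) ∈ U) ↔
      ∀ N ∈ V, ExtZeroSucc A n M N) := by
  obtain ⟨hU, _⟩ := hpair
  constructor
  · constructor
    · intro h N hN
      exact main_forward hU hhered n M h N hN n le_rfl
    · exact main_backward hU n M
  · constructor
    · intro h N hN P
      exact (memU_iff hU _).mp (h P) N hN
    · intro h P
      rw [memU_iff hU]
      intro N hN
      exact h N hN P


end OSG
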